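/- Let G be a connected threshold graph on vertices v₁, ..., v_n (ordered as in the definition of a threshold graph), and let t ≤ n be the largest index such that {v_i, v_t} ∈ E(G) for all i < t. Then {v_i, v_j} ∈ E(G) for all 1 ≤ i < j ≤ t, and {v_k, v_ℓ} ∉ E(G) whenever t ≤ k < ℓ ≤ n. -/
import Mathlib


/-- A simple graph on `Fin n` is threshold-ordered (with respect to the natural order of
its vertices `v₁, …, v_n`) if whenever `{v_k, v_ℓ} ∈ E(G)` with `k < ℓ`, we have
`{v_i, v_ℓ} ∈ E(G)` for all `i < k` and `{v_k, v_j} ∈ E(G)` for all `j ≠ k` with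
`j < ℓ`. -/
def IsThresholdOrdered {n : ℕ} (G : SimpleGraph (Fin n)) : Prop :=
  ∀ k l : Fin n, k < l → G.Adj k l →
    (∀ i, i < k → G.Adj i l) ∧ (∀ j, j ≠ k → j < l → G.Adj k j)

/-- For a connected threshold graph on vertices `v₁, …, v_{n+1}` (zero-indexed here by
`Fin (n+1)`), with `t` the largest index such that `{v_i, v_t} ∈ E(G)` for all `i < t`,
all pairs of vertices with indices at most `t` are adjacent, and no two vertices with
indices at least `t` are adjacent. -/
theorem threshold_clique_and_independent {n : ℕ} (G : SimpleGraph (Fin (n + 1)))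
    [DecidableRel G.Adj] (hG : IsThresholdOrdered G) (hconn : G.Connected)
    (t : Fin (n + 1)) (ht : ∀ i, i < t → G.Adj i t)
    (htmax : ∀ s : Fin (n + 1), (∀ i, i < s → G.Adj i s) → s ≤ t) :
    (∀ i j : Fin (n + 1), i < j → j ≤ t → G.Adj i j) ∧
    (∀ k l : Fin (n + 1), t ≤ k → k < l → ¬ G.Adj k l) := by
  classical
  constructor
  · intro i j hij hjt
    rcases eq_or_lt_of_le hjt with h | h
    · exact h ▸ ht i (h ▸ hij)
    · have hjt' := ht j h
      have := (hG j t h hjt').2 i (ne_of_lt hij) (hij.trans h)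
      exact this.symm
  · intro k l htk hkl hadj
    have hlt : t < l := lt_of_le_of_lt htk hkl
    -- every index ≤ k is adjacent to l
    have hle : ∀ i : Fin (n + 1), i ≤ k → G.Adj i l := by
      intro i hi
      rcases lt_or_eq_of_le hi with h | h
      · exact (hG k l hkl hadj).1 i h
      · exact h ▸ hadj
    -- some index below l is not adjacent to l
    have hex : ∃ m : ℕ, ∃ hm : m < n + 1,
        (⟨m, hm⟩ : Fin (n + 1)) < l ∧ ¬ G.Adj ⟨m, hm⟩ l := by
      by_contra hc
      push_neg at hc
      have : ∀ i : Fin (n + 1), i < l → G.Adj i l := by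
        intro i hi
        have := hc i.1 i.2 (by simpa using hi)
        simpa using this
      exact absurd (htmax l this) (not_le.mpr hlt)
    set m := Nat.find hex with hmdef
    obtain ⟨hm1, hm2, hm3⟩ := Nat.find_spec hex
    set M : Fin (n + 1) := ⟨m, hm1⟩ with hMdef
    -- k < M
    have hkM : (k : ℕ) < m := by
      by_contra hc
      push_neg at hc
      exact hm3 (hle M (by simpa [Fin.le_def, hMdef] using hc))
    have hm1' : m - 1 < n + 1 := by omega
    set M' : Fin (n + 1) := ⟨m - 1, hm1'⟩ with hM'def
    have hM'l : M' < l := by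
      simp only [Fin.lt_def, hM'def, hMdef] at hm2 ⊢
      omega
    -- M' is adjacent to l by minimality of m
    have hM'adj : G.Adj M' l := by
      by_contra hc
      exact Nat.find_min hex (show m - 1 < m by omega) ⟨hm1', hM'l, hc⟩
    have hMne : M ≠ M' := by
      simp only [Fin.ne_iff_vne, hMdef, hM'def]
      omega
    have hM'M_lt : M' < M := by
      simp only [Fin.lt_def, hMdef, hM'def]
      omega
    have hM'M : G.Adj M' M := (hG M' l hM'l hM'adj).2 M hMne hm2
    -- every index below M is adjacent to M
    have hall : ∀ i, i < M → G.Adj i M := by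
      intro i hi
      rcases lt_trichotomy i M' with h | h | h
      · exact (hG M' M hM'M_lt hM'M).1 i h
      · exact h ▸ hM'M
      · exfalso
        simp only [Fin.lt_def, hMdef, hM'def] at hi h
        omega
    have := htmax M hall
    have : (m : ℕ) ≤ (t : ℕ) := by simpa [Fin.le_def, hMdef] using this
    have : (t : ℕ) ≤ (k : ℕ) := htk
    omega
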